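/- arXiv:2304.06633 — 3 statements merged into one kernel-verified Lean document; each statement's English description precedes it below -/
import Mathlib

section
/- Kan fibrations of simplicial sets are stable under filtered colimits: if I is a filtered category and α : X → Y is a natural transformation between functors X, Y : I → sSet such that each component α_i : X(i) → Y(i) is a Kan fibration, then the induced map colim X → colim Y on colimits is a Kan fibration. -/
open CategoryTheory

namespace Statement5

universe u

/-- A map of simplicial sets is a Kan fibration if it has the right lifting
property with respect to all horn inclusions `Λⁿ_k → Δⁿ` for `0 ≤ k ≤ n`,
`n ≥ 1`. -/
def IsKanFibration {X Y : SSet.{u}} (p : X ⟶ Y) : Prop :=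
  ∀ (n : ℕ) (i : Fin (n + 2)), HasLiftingProperty (SSet.horn (n + 1) i).ι p

section Aux

open Simplicial SSet Limits SimplexCategory




variable {I : Type u} [SmallCategory I] [IsFiltered I]

lemma jointly_surj (Z : I ⥤ SSet.{u}) (m : SimplexCategoryᵒᵖ) (x : (Limits.colimit Z).obj m) :
    ∃ (k : I) (y : (Z.obj k).obj m), (Limits.colimit.ι Z k).app m y = x := by
  have hc : IsColimit (((evaluation SimplexCategoryᵒᵖ (Type u)).obj m).mapCocone
      (colimit.cocone Z)) := isColimitOfPreserves _ (colimit.isColimit Z)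
  obtain ⟨k, y, hy⟩ := Types.jointly_surjective _ hc x
  exact ⟨k, y, hy⟩

lemma eventually_eq_pt (Z : I ⥤ SSet.{u}) {m : SimplexCategoryᵒᵖ} {k : I}
    (x y : (Z.obj k).obj m)
    (h : (Limits.colimit.ι Z k).app m x = (Limits.colimit.ι Z k).app m y) :
    ∃ (k' : I) (t : k ⟶ k'), (Z.map t).app m x = (Z.map t).app m y := by
  have hc : IsColimit (((evaluation SimplexCategoryᵒᵖ (Type u)).obj m).mapCocone
      (colimit.cocone Z)) := isColimitOfPreserves _ (colimit.isColimit Z)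
  have h' : (((evaluation SimplexCategoryᵒᵖ (Type u)).obj m).mapCocone
      (colimit.cocone Z)).ι.app k x = (((evaluation SimplexCategoryᵒᵖ (Type u)).obj m).mapCocone
      (colimit.cocone Z)).ι.app k y := h
  rw [Types.FilteredColimit.isColimit_eq_iff _ hc] at h'
  obtain ⟨l, f, g, hfg⟩ := h'
  refine ⟨IsFiltered.coeq f g, f ≫ IsFiltered.coeqHom f g, ?_⟩
  have h1 : (Z.map (f ≫ IsFiltered.coeqHom f g)).app m x
      = (Z.map (IsFiltered.coeqHom f g)).app m ((Z.map f).app m x) := by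
    rw [Z.map_comp]; rfl
  have h2 : (Z.map (f ≫ IsFiltered.coeqHom f g)).app m y
      = (Z.map (IsFiltered.coeqHom f g)).app m ((Z.map g).app m y) := by
    rw [IsFiltered.coeq_condition f g, Z.map_comp]; rfl
  rw [h1, h2]
  exact congrArg _ hfg

lemma eventually_eq_finset (Z : I ⥤ SSet.{u}) {A : Type} [DecidableEq A]
    (s : Finset A) (m : A → SimplexCategoryᵒᵖ) (k : I)
    (x y : ∀ a, (Z.obj k).obj (m a))
    (h : ∀ a ∈ s, (Limits.colimit.ι Z k).app (m a) (x a)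
      = (Limits.colimit.ι Z k).app (m a) (y a)) :
    ∃ (k' : I) (t : k ⟶ k'), ∀ a ∈ s,
      (Z.map t).app (m a) (x a) = (Z.map t).app (m a) (y a) := by
  classical
  induction s using Finset.induction with
  | empty => exact ⟨k, 𝟙 k, by simp⟩
  | @insert a s ha ih =>
    obtain ⟨k₁, t₁, ht₁⟩ := ih (fun b hb => h b (Finset.mem_insert_of_mem hb))
    have hpush : ∀ (b : A) (z : (Z.obj k).obj (m b)),
        (Limits.colimit.ι Z k₁).app (m b) ((Z.map t₁).app (m b) z)
          = (Limits.colimit.ι Z k).app (m b) z := by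
      intro b z
      have := Limits.colimit.w Z t₁
      conv_rhs => rw [← this]
      rfl
    obtain ⟨k₂, t₂, ht₂⟩ := eventually_eq_pt Z ((Z.map t₁).app (m a) (x a))
      ((Z.map t₁).app (m a) (y a))
      (by rw [hpush, hpush]; exact h a (Finset.mem_insert_self a s))
    refine ⟨k₂, t₁ ≫ t₂, ?_⟩
    intro b hb
    have hco : ∀ (z : (Z.obj k).obj (m b)), (Z.map (t₁ ≫ t₂)).app (m b) z
        = (Z.map t₂).app (m b) ((Z.map t₁).app (m b) z) := by
      intro z; rw [Z.map_comp]; rfl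
    rw [hco, hco]
    rcases Finset.mem_insert.mp hb with rfl | hb
    · exact ht₂
    · exact congrArg _ (ht₁ b hb)

lemma yonedaEquiv_symm_comp {W V : SSet.{u}} (S : SimplexCategory)
    (x : W.obj (Opposite.op S)) (f : W ⟶ V) :
    (SSet.yonedaEquiv (X := W) (n := S)).symm x ≫ f = (SSet.yonedaEquiv (X := V) (n := S)).symm (f.app _ x) := by
  ext m z
  exact types_congr_hom (f.naturality z.down.op) x

lemma delta_factor (Z : I ⥤ SSet.{u}) (N : ℕ) (g : Δ[N] ⟶ Limits.colimit Z) :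
    ∃ (k : I) (g' : Δ[N] ⟶ Z.obj k), g' ≫ Limits.colimit.ι Z k = g := by
  obtain ⟨k, y, hy⟩ := jointly_surj Z (Opposite.op ⦋N⦌) (SSet.yonedaEquiv g)
  refine ⟨k, (SSet.yonedaEquiv (X := Z.obj k) (n := ⦋N⦌)).symm y, ?_⟩
  rw [yonedaEquiv_symm_comp, hy, Equiv.symm_apply_apply]




/-- general-source variant of `factor_δ` -/
def myFactor {m : SimplexCategory} {p : ℕ} (f : m ⟶ ⦋p+1⦌) (j : Fin (p+2)) :
    m ⟶ ⦋p⦌ :=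
  f ≫ σ (Fin.predAbove 0 j)

lemma myFactor_spec {m : SimplexCategory} {p : ℕ} (f : m ⟶ ⦋p+1⦌) (j : Fin (p+2))
    (hj : ∀ k, f.toOrderHom k ≠ j) : myFactor f j ≫ δ j = f := by
  exact factor_δ_spec (m := m.len) f j hj

lemma pair_exists (n : ℕ) (i : Fin (n+2)) (j j' : Fin (n+2)) (hlt : j < j')
    (hj : j ≠ i) (hj' : j' ≠ i) :
    ∃ (q : SimplexCategory) (e e' : q ⟶ ⦋n⦌),
      e ≫ δ j = e' ≫ δ j' ∧
      ∀ (m : SimplexCategory) (u u' : m ⟶ ⦋n⦌), u ≫ δ j = u' ≫ δ j' →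
        ∃ γ : m ⟶ q, u = γ ≫ e ∧ u' = γ ≫ e' := by
  match n with
  | 0 =>
    exfalso
    have h1 : (j : ℕ) < (j' : ℕ) := hlt
    have h2 : (j : ℕ) ≠ (i : ℕ) := fun h => hj (Fin.ext h)
    have h3 : (j' : ℕ) ≠ (i : ℕ) := fun h => hj' (Fin.ext h)
    have := j'.isLt
    have := i.isLt
    omega
  | (p+1) =>
    have hne0 : j' ≠ 0 := Fin.ne_zero_of_lt hlt
    have hnelast : j ≠ Fin.last _ := Fin.ne_last_of_lt hlt
    set a := j'.pred hne0 with ha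
    set b := j.castPred hnelast with hb
    have key : δ a ≫ δ j = δ b ≫ δ j' := by
      have := SimplexCategory.δ_comp_δ' (i := b) (j := j')
        (by rw [hb, Fin.castSucc_castPred]; exact hlt)
      rw [ha, this]
      congr 1
    refine ⟨⦋p⦌, δ a, δ b, key, ?_⟩
    intro m u u' huu'
    have havoid1 : ∀ k, u.toOrderHom k ≠ a := by
      intro k hk
      have h1 : (u ≫ δ j).toOrderHom k = j.succAbove (u.toOrderHom k) := rfl
      have h2 : (u' ≫ δ j').toOrderHom k = j'.succAbove (u'.toOrderHom k) := rfl
      have h3 : j.succAbove (u.toOrderHom k) ≠ j' := by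
        rw [← h1, huu', h2]
        exact Fin.succAbove_ne j' _
      apply h3
      rw [hk, ha]
      rw [Fin.succAbove_of_le_castSucc]
      · exact Fin.succ_pred _ _
      · rw [Fin.le_castSucc_iff, Fin.succ_pred]
        exact hlt
    have havoid2 : ∀ k, u'.toOrderHom k ≠ b := by
      intro k hk
      have h1 : (u ≫ δ j).toOrderHom k = j.succAbove (u.toOrderHom k) := rfl
      have h2 : (u' ≫ δ j').toOrderHom k = j'.succAbove (u'.toOrderHom k) := rfl
      have h3 : j'.succAbove (u'.toOrderHom k) ≠ j := by
        rw [← h2, ← huu', h1]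
        exact Fin.succAbove_ne j _
      apply h3
      rw [hk, hb]
      rw [Fin.succAbove_of_castSucc_lt]
      · exact Fin.castSucc_castPred _ _
      · rw [Fin.castSucc_castPred]
        exact hlt
    have hu : myFactor u a ≫ δ a = u := myFactor_spec u a havoid1
    have hu' : myFactor u' b ≫ δ b = u' := myFactor_spec u' b havoid2
    have hmono : Mono (δ a ≫ δ j) := mono_comp _ _
    have hγ : myFactor u a = myFactor u' b := by
      have heq : myFactor u a ≫ (δ a ≫ δ j) = myFactor u' b ≫ (δ a ≫ δ j) := by
        calc myFactor u a ≫ (δ a ≫ δ j) = u ≫ δ j := by rw [← Category.assoc, hu]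
        _ = u' ≫ δ j' := huu'
        _ = myFactor u' b ≫ (δ b ≫ δ j') := by rw [← Category.assoc, hu']
        _ = myFactor u' b ≫ (δ a ≫ δ j) := by rw [key]
      exact (cancel_mono (δ a ≫ δ j)).mp heq
    exact ⟨myFactor u a, hu.symm, by rw [hγ]; exact hu'.symm⟩




def myFactor' {m : SimplexCategory} {p : ℕ} (f : m ⟶ ⦋p+1⦌) (j : Fin (p+2)) :
    m ⟶ ⦋p⦌ :=
  f ≫ σ (Fin.predAbove 0 j)

lemma myFactor'_spec {m : SimplexCategory} {p : ℕ} (f : m ⟶ ⦋p+1⦌) (j : Fin (p+2))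
    (hj : ∀ k, f.toOrderHom k ≠ j) : myFactor' f j ≫ δ j = f :=
  factor_δ_spec (m := m.len) f j hj

variable (n : ℕ) (i : Fin (n+2))

lemma exists_avoid {m : SimplexCategoryᵒᵖ} (α : (Λ[n+1, i] : SSet.{u}).obj m) :
    ∃ j : Fin (n+2), j ≠ i ∧ ∀ k, α.1.down.toOrderHom k ≠ j := by
  have h := α.2
  rw [mem_horn_iff, Set.ne_univ_iff_exists_notMem] at h
  obtain ⟨j, hj⟩ := h
  simp only [Set.mem_union, Set.mem_range, Set.mem_singleton_iff, not_or, not_exists] at hj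
  exact ⟨j, hj.2, fun k hk => hj.1 k hk⟩

lemma horn_map_down {m m' : SimplexCategoryᵒᵖ} (ψ : m ⟶ m')
    (α : (Λ[n+1, i] : SSet.{u}).obj m) :
    ((Λ[n+1, i] : SSet.{u}).map ψ α).1.down = ψ.unop ≫ α.1.down :=
  rfl

lemma face_down (j : Fin (n+2)) (h : j ≠ i) :
    ((horn.face i j h : (Λ[n+1, i] : SSet.{u}).obj _)).1.down = δ j :=
  rfl

variable (W : SSet.{u})

def Compat (r : ∀ j : Fin (n+2), j ≠ i → W.obj (Opposite.op ⦋n⦌)) : Prop :=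
  ∀ ⦃m : SimplexCategory⦄ (u u' : m ⟶ ⦋n⦌) (j j' : Fin (n+2)) (hj : j ≠ i) (hj' : j' ≠ i),
    u ≫ δ j = u' ≫ δ j' → W.map u.op (r j hj) = W.map u'.op (r j' hj')

lemma hornMk (r : ∀ j : Fin (n+2), j ≠ i → W.obj (Opposite.op ⦋n⦌))
    (hr : Compat n i W r) :
    ∃ φ : (Λ[n+1, i] : SSet.{u}) ⟶ W,
      ∀ (j : Fin (n+2)) (h : j ≠ i), φ.app _ (horn.face i j h) = r j h := by
  choose jf hjne hjav using
    fun (m : SimplexCategoryᵒᵖ) (α : (Λ[n+1, i] : SSet.{u}).obj m) => exists_avoid n i α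
  refine ⟨{
    app := fun m => TypeCat.ofHom (fun α => W.map (myFactor' α.1.down (jf m α)).op (r _ (hjne m α)))
    naturality := ?_ }, ?_⟩
  · intro m m' ψ
    ext α
    set α' := (Λ[n+1, i] : SSet.{u}).map ψ α with hα'
    show W.map (myFactor' α'.1.down (jf m' α')).op (r _ (hjne m' α'))
      = W.map ψ (W.map (myFactor' α.1.down (jf m α)).op (r _ (hjne m α)))
    rw [← FunctorToTypes.map_comp_apply, ← Quiver.Hom.op_unop ψ, ← op_comp]
    apply hr
    rw [myFactor'_spec α'.1.down (jf m' α') (hjav m' α'), Category.assoc,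
      myFactor'_spec α.1.down (jf m α) (hjav m α)]
    exact horn_map_down n i ψ α
  · intro j h
    show W.map (myFactor' (horn.face i j h).1.down
        (jf (Opposite.op ⦋n⦌) (horn.face i j h))).op
        (r (jf (Opposite.op ⦋n⦌) (horn.face i j h)) (hjne _ _)) = r j h
    have step : W.map (myFactor' (horn.face i j h).1.down
          (jf (Opposite.op ⦋n⦌) (horn.face i j h))).op
          (r (jf (Opposite.op ⦋n⦌) (horn.face i j h)) (hjne _ _))
        = W.map (𝟙 (⦋n⦌ : SimplexCategory)).op (r j h) := by
      apply hr
      rw [myFactor'_spec _ _ (hjav _ (horn.face i j h)), Category.id_comp]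
      exact face_down.{u} n i j h
    rw [step, op_id, FunctorToTypes.map_id_apply]


variable {I : Type u} [SmallCategory I] [IsFiltered I]

lemma push_ι (Z : I ⥤ SSet.{u}) {k k' : I} (t : k ⟶ k') (m : SimplexCategoryᵒᵖ)
    (z : (Z.obj k).obj m) :
    (Limits.colimit.ι Z k').app m ((Z.map t).app m z)
      = (Limits.colimit.ι Z k).app m z := by
  conv_rhs => rw [← Limits.colimit.w Z t]
  rfl

lemma factor_horn (Z : I ⥤ SSet.{u}) (n : ℕ) (i : Fin (n+2))
    (f : (Λ[n+1, i] : SSet.{u}) ⟶ Limits.colimit Z) :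
    ∃ (k : I) (f' : (Λ[n+1, i] : SSet.{u}) ⟶ Z.obj k),
      f' ≫ Limits.colimit.ι Z k = f := by
  classical
  choose k₀ r₀ hr₀ using fun (j : {j : Fin (n+2) // j ≠ i}) =>
    jointly_surj Z (Opposite.op ⦋n⦌) (f.app _ (horn.face i j.1 j.2))
  obtain ⟨S, hS⟩ := IsFiltered.sup_objs_exists (Finset.image k₀ Finset.univ)
  have harr : ∀ j, Nonempty (k₀ j ⟶ S) :=
    fun j => hS (Finset.mem_image_of_mem _ (Finset.mem_univ j))
  have t : ∀ j, k₀ j ⟶ S := fun j => (harr j).some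
  set r₁ : ∀ _ : {j : Fin (n+2) // j ≠ i}, (Z.obj S).obj (Opposite.op ⦋n⦌) :=
    fun j => (Z.map (t j)).app _ (r₀ j) with hr₁def
  have hr₁ : ∀ j, (Limits.colimit.ι Z S).app _ (r₁ j)
      = f.app _ (horn.face i j.1 j.2) := by
    intro j
    rw [hr₁def, push_ι]
    exact hr₀ j
  set P := {t : Fin (n+2) × Fin (n+2) // t.1 < t.2 ∧ t.1 ≠ i ∧ t.2 ≠ i} with hP
  choose q e e' hee hfact using
    fun (p : P) => pair_exists n i p.1.1 p.1.2 p.2.1 p.2.2.1 p.2.2.2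
  set xf : ∀ p : P, (Z.obj S).obj (Opposite.op (q p)) :=
    fun p => (Z.obj S).map (e p).op (r₁ ⟨p.1.1, p.2.2.1⟩) with hxf
  set yf : ∀ p : P, (Z.obj S).obj (Opposite.op (q p)) :=
    fun p => (Z.obj S).map (e' p).op (r₁ ⟨p.1.2, p.2.2.2⟩) with hyf
  have hface : ∀ p : P,
      (Λ[n+1, i] : SSet.{u}).map (e p).op (horn.face i p.1.1 p.2.2.1)
        = (Λ[n+1, i] : SSet.{u}).map (e' p).op (horn.face i p.1.2 p.2.2.2) := by
    intro p
    apply Subtype.ext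
    apply ULift.ext
    show ((Λ[n+1, i] : SSet.{u}).map (e p).op (horn.face i p.1.1 p.2.2.1)).1.down = _
    rw [horn_map_down, horn_map_down, face_down, face_down]
    exact hee p
  have hxy : ∀ p ∈ (Finset.univ : Finset P),
      (Limits.colimit.ι Z S).app _ (xf p) = (Limits.colimit.ι Z S).app _ (yf p) := by
    intro p _
    rw [hxf, hyf]
    have nat1 := types_congr_hom ((Limits.colimit.ι Z S).naturality (e p).op)
      (r₁ ⟨p.1.1, p.2.2.1⟩)
    have nat2 := types_congr_hom ((Limits.colimit.ι Z S).naturality (e' p).op)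
      (r₁ ⟨p.1.2, p.2.2.2⟩)
    dsimp at nat1 nat2 ⊢
    rw [nat1, nat2, hr₁, hr₁]
    have natf1 := types_congr_hom (f.naturality (e p).op) (horn.face i p.1.1 p.2.2.1)
    have natf2 := types_congr_hom (f.naturality (e' p).op) (horn.face i p.1.2 p.2.2.2)
    dsimp at natf1 natf2
    rw [← natf1, ← natf2, hface p]
  obtain ⟨k₂, w, hw⟩ := eventually_eq_finset Z Finset.univ
    (fun p => Opposite.op (q p)) S xf yf hxy
  set r₂ : ∀ (j : Fin (n+2)), j ≠ i → (Z.obj k₂).obj (Opposite.op ⦋n⦌) :=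
    fun j h => (Z.map w).app _ (r₁ ⟨j, h⟩) with hr₂def
  have hmain : ∀ ⦃m : SimplexCategory⦄ (u u' : m ⟶ ⦋n⦌) (j j' : Fin (n+2))
      (hj : j ≠ i) (hj' : j' ≠ i), j < j' → u ≫ δ j = u' ≫ δ j' →
      (Z.obj k₂).map u.op (r₂ j hj) = (Z.obj k₂).map u'.op (r₂ j' hj') := by
    intro m u u' j j' hj hj' hlt huu
    set p : P := ⟨(j, j'), hlt, hj, hj'⟩ with hp
    obtain ⟨γ, hγ, hγ'⟩ := hfact p m u u' huu
    have h1 : (Z.obj k₂).map u.op (r₂ j hj)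
        = (Z.obj k₂).map γ.op ((Z.map w).app _ (xf p)) := by
      rw [hγ, op_comp, FunctorToTypes.map_comp_apply]
      have nat := types_congr_hom ((Z.map w).naturality (e p).op) (r₁ ⟨j, hj⟩)
      dsimp at nat
      exact congrArg ((Z.obj k₂).map γ.op) nat.symm
    have h2 : (Z.obj k₂).map u'.op (r₂ j' hj')
        = (Z.obj k₂).map γ.op ((Z.map w).app _ (yf p)) := by
      rw [hγ', op_comp, FunctorToTypes.map_comp_apply]
      have nat := types_congr_hom ((Z.map w).naturality (e' p).op) (r₁ ⟨j', hj'⟩)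
      dsimp at nat
      exact congrArg ((Z.obj k₂).map γ.op) nat.symm
    rw [h1, h2, hw p (Finset.mem_univ p)]
  have hcompat : Compat n i (Z.obj k₂) r₂ := by
    intro m u u' j j' hj hj' huu
    rcases lt_trichotomy j j' with hlt | heq | hgt
    · exact hmain u u' j j' hj hj' hlt huu
    · subst heq
      obtain rfl : u = u' := (cancel_mono (δ j)).mp huu
      rfl
    · exact (hmain u' u j' j hj' hj hgt huu.symm).symm
  obtain ⟨φ, hφ⟩ := hornMk n i (Z.obj k₂) r₂ hcompat
  refine ⟨k₂, φ, ?_⟩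
  apply horn.hom_ext
  intro j hj
  show (Limits.colimit.ι Z k₂).app _ (φ.app _ (horn.face i j hj)) = _
  rw [hφ j hj, hr₂def]
  show (Limits.colimit.ι Z k₂).app _ ((Z.map w).app _ (r₁ ⟨j, hj⟩)) = _
  rw [push_ι, hr₁]

lemma horn_eventually_eq (Z : I ⥤ SSet.{u}) (n : ℕ) (i : Fin (n+2)) {k : I}
    (A B : (Λ[n+1, i] : SSet.{u}) ⟶ Z.obj k)
    (hAB : A ≫ Limits.colimit.ι Z k = B ≫ Limits.colimit.ι Z k) :
    ∃ (k' : I) (t : k ⟶ k'), A ≫ Z.map t = B ≫ Z.map t := by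
  classical
  set xf : ∀ _ : {j : Fin (n+2) // j ≠ i}, (Z.obj k).obj (Opposite.op ⦋n⦌) :=
    fun j => A.app _ (horn.face i j.1 j.2) with hxf
  set yf : ∀ _ : {j : Fin (n+2) // j ≠ i}, (Z.obj k).obj (Opposite.op ⦋n⦌) :=
    fun j => B.app _ (horn.face i j.1 j.2) with hyf
  have hxy : ∀ j ∈ (Finset.univ : Finset {j : Fin (n+2) // j ≠ i}),
      (Limits.colimit.ι Z k).app _ (xf j) = (Limits.colimit.ι Z k).app _ (yf j) := by
    intro j _
    exact types_congr_hom (congrArg (fun (ψ : (Λ[n+1, i] : SSet.{u}) ⟶ Limits.colimit Z) =>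
      ψ.app (Opposite.op ⦋n⦌)) hAB) (horn.face i j.1 j.2)
  obtain ⟨k', t, ht⟩ := eventually_eq_finset Z Finset.univ
    (fun _ => Opposite.op ⦋n⦌) k xf yf hxy
  refine ⟨k', t, ?_⟩
  apply horn.hom_ext
  intro j hj
  exact ht ⟨j, hj⟩ (Finset.mem_univ _)

theorem statement5_aux (X Y : I ⥤ SSet.{u}) (α : X ⟶ Y)
    (h : ∀ i : I, ∀ (n : ℕ) (j : Fin (n + 2)),
      HasLiftingProperty ((SSet.horn (n + 1) j).ι) (α.app i)) :
    ∀ (n : ℕ) (i : Fin (n + 2)),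
      HasLiftingProperty ((SSet.horn (n + 1) i).ι) (Limits.colimMap α) := by
  intro n i
  constructor
  intro f g sq
  obtain ⟨k₀, g₀, hg₀⟩ := delta_factor Y (n+1) g
  obtain ⟨k₁, f₁, hf₁⟩ := factor_horn X n i f
  obtain ⟨k₂, t₀, t₁, -⟩ : ∃ (k₂ : I) (_ : k₀ ⟶ k₂) (_ : k₁ ⟶ k₂), True :=
    ⟨IsFiltered.max k₀ k₁, IsFiltered.leftToMax _ _, IsFiltered.rightToMax _ _, trivial⟩
  obtain ⟨g₂, hg₂⟩ : ∃ g₂ : Δ[n+1] ⟶ Y.obj k₂,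
      g₂ ≫ Limits.colimit.ι Y k₂ = g :=
    ⟨g₀ ≫ Y.map t₀, by rw [Category.assoc, Limits.colimit.w]; exact hg₀⟩
  obtain ⟨f₂, hf₂⟩ : ∃ f₂ : (Λ[n+1, i] : SSet.{u}) ⟶ X.obj k₂,
      f₂ ≫ Limits.colimit.ι X k₂ = f :=
    ⟨f₁ ≫ X.map t₁, by rw [Category.assoc, Limits.colimit.w]; exact hf₁⟩
  have hAB : (f₂ ≫ α.app k₂) ≫ Limits.colimit.ι Y k₂
      = ((SSet.horn (n+1) i).ι ≫ g₂) ≫ Limits.colimit.ι Y k₂ := by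
    calc (f₂ ≫ α.app k₂) ≫ Limits.colimit.ι Y k₂
        = (f₂ ≫ Limits.colimit.ι X k₂) ≫ Limits.colimMap α := by
          simp only [Category.assoc, Limits.ι_colimMap]
      _ = f ≫ Limits.colimMap α := by rw [hf₂]
      _ = (SSet.horn (n+1) i).ι ≫ g := sq.w
      _ = (SSet.horn (n+1) i).ι ≫ (g₂ ≫ Limits.colimit.ι Y k₂) := by rw [hg₂]
      _ = ((SSet.horn (n+1) i).ι ≫ g₂) ≫ Limits.colimit.ι Y k₂ := by
          simp only [Category.assoc]
  obtain ⟨k₃, t, ht⟩ := horn_eventually_eq Y n i _ _ hAB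
  have square : CommSq (f₂ ≫ X.map t) ((SSet.horn (n+1) i).ι)
      (α.app k₃) (g₂ ≫ Y.map t) := by
    constructor
    calc (f₂ ≫ X.map t) ≫ α.app k₃
        = f₂ ≫ (X.map t ≫ α.app k₃) := by simp only [Category.assoc]
      _ = f₂ ≫ (α.app k₂ ≫ Y.map t) := by rw [α.naturality t]
      _ = (f₂ ≫ α.app k₂) ≫ Y.map t := by simp only [Category.assoc]
      _ = ((SSet.horn (n+1) i).ι ≫ g₂) ≫ Y.map t := ht
      _ = (SSet.horn (n+1) i).ι ≫ (g₂ ≫ Y.map t) := by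
          simp only [Category.assoc]
  obtain ⟨l⟩ := ((h k₃ n i).sq_hasLift square).exists_lift
  exact CommSq.HasLift.mk' {
    l := l.l ≫ Limits.colimit.ι X k₃
    fac_left := by
      calc (SSet.horn (n+1) i).ι ≫ (l.l ≫ Limits.colimit.ι X k₃)
          = ((SSet.horn (n+1) i).ι ≫ l.l) ≫ Limits.colimit.ι X k₃ := by
            simp only [Category.assoc]
        _ = (f₂ ≫ X.map t) ≫ Limits.colimit.ι X k₃ := by rw [l.fac_left]
        _ = f₂ ≫ (X.map t ≫ Limits.colimit.ι X k₃) := by simp only [Category.assoc]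
        _ = f₂ ≫ Limits.colimit.ι X k₂ := by rw [Limits.colimit.w]
        _ = f := hf₂
    fac_right := by
      calc (l.l ≫ Limits.colimit.ι X k₃) ≫ Limits.colimMap α
          = l.l ≫ (Limits.colimit.ι X k₃ ≫ Limits.colimMap α) := by
            simp only [Category.assoc]
        _ = l.l ≫ (α.app k₃ ≫ Limits.colimit.ι Y k₃) := by rw [Limits.ι_colimMap]
        _ = (l.l ≫ α.app k₃) ≫ Limits.colimit.ι Y k₃ := by simp only [Category.assoc]
        _ = (g₂ ≫ Y.map t) ≫ Limits.colimit.ι Y k₃ := by rw [l.fac_right]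
        _ = g₂ ≫ (Y.map t ≫ Limits.colimit.ι Y k₃) := by simp only [Category.assoc]
        _ = g₂ ≫ Limits.colimit.ι Y k₂ := by rw [Limits.colimit.w]
        _ = g := hg₂ }


end Aux

/-- Kan fibrations of simplicial sets are stable under filtered colimits: if
`I` is filtered and `α : X ⟶ Y` is a natural transformation of `I`-diagrams of
simplicial sets whose components are Kan fibrations, then the induced map on
colimits is a Kan fibration. -/
theorem statement5 {I : Type u} [SmallCategory I] [IsFiltered I]
    (X Y : I ⥤ SSet.{u}) (α : X ⟶ Y)
    (h : ∀ i : I, IsKanFibration (α.app i)) :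
    IsKanFibration (Limits.colimMap α) :=
  fun n i => statement5_aux X Y α (fun k n j => h k n j) n i

end Statement5
end

section
/- The underlying simplicial set of any simplicial group is a Kan complex: every horn Λⁿ_k → G (0 ≤ k ≤ n) in a simplicial group G admits a filler Δⁿ → G. -/
open CategoryTheory Simplicial SimplexCategory Opposite SSet

namespace Statement6

universe u

/-- The definition of a Kan complex as it stood in the older Mathlib: every horn
`SSet.horn n i ⟶ S` (for all `n`, including `n = 0`) extends to `Δ[n] ⟶ S`. -/
class KanComplex (S : SSet.{u}) : Prop where
  hornFilling : ∀ ⦃n : ℕ⦄ ⦃i : Fin (n + 1)⦄ (σ₀ : ((SSet.horn.{u} n i : SSet.{u}) ⟶ S)),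
    ∃ σ : SSet.stdSimplex.{u}.obj (SimplexCategory.mk n) ⟶ S, σ₀ = (SSet.horn.{u} n i).ι ≫ σ

variable (G : SimplexCategoryᵒᵖ ⥤ GrpCat.{u})

lemma map_comp_apply {a b c : SimplexCategory} (f : a ⟶ b) (g : b ⟶ c) (y : G.obj (op c)) :
    G.map (f ≫ g).op y = G.map f.op (G.map g.op y) := by
  rw [op_comp, G.map_comp]; rfl

lemma A1 {m : ℕ} (b : Fin (m + 2)) (y : G.obj (op ⦋m + 1⦌)) :
    G.map (δ b.castSucc).op (G.map (σ b).op y) = y := by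
  rw [← map_comp_apply, δ_comp_σ_self, op_id, G.map_id]; rfl

lemma A2 {m : ℕ} (b : Fin (m + 2)) (y : G.obj (op ⦋m + 1⦌)) :
    G.map (δ b.succ).op (G.map (σ b).op y) = y := by
  rw [← map_comp_apply, δ_comp_σ_succ, op_id, G.map_id]; rfl

lemma A3 {m : ℕ} (a : Fin (m + 2)) (b : Fin (m + 1)) (h : a ≤ b.castSucc)
    (y : G.obj (op ⦋m + 1⦌)) :
    G.map (δ a.castSucc).op (G.map (σ b.succ).op y) =
      G.map (σ b).op (G.map (δ a).op y) := by
  rw [← map_comp_apply, δ_comp_σ_of_le h, map_comp_apply]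

lemma A4 {m : ℕ} (a : Fin (m + 2)) (b : Fin (m + 1)) (h : b.castSucc < a)
    (y : G.obj (op ⦋m + 1⦌)) :
    G.map (δ a.succ).op (G.map (σ b.castSucc).op y) =
      G.map (σ b).op (G.map (δ a).op y) := by
  rw [← map_comp_apply, δ_comp_σ_of_gt h, map_comp_apply]

lemma A5 {m : ℕ} (a b : Fin (m + 2)) (h : a ≤ b) (w : G.obj (op ⦋m + 2⦌)) :
    G.map (δ a).op (G.map (δ b.succ).op w) =
      G.map (δ b).op (G.map (δ a.castSucc).op w) := by
  rw [← map_comp_apply, δ_comp_δ h, map_comp_apply]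


section Moore

variable {m : ℕ} (i : Fin (m + 3)) (x : ∀ j : Fin (m + 3), j ≠ i → G.obj (op ⦋m + 1⦌))

lemma xeq (j k : Fin (m + 3)) (e : j = k) (hj : j ≠ i) (hk : k ≠ i) :
    x j hj = x k hk := by subst e; rfl

variable (hx : ∀ (a b : Fin (m + 2)), a ≤ b → ∀ (h1 : b.succ ≠ i) (h2 : a.castSucc ≠ i),
      G.map (δ a).op (x b.succ h1) = G.map (δ b).op (x a.castSucc h2))

include hx

lemma asc_step (r : ℕ) (hr : r + 1 ≤ i.val) (w : G.obj (op ⦋m + 2⦌))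
    (hw : ∀ (j : Fin (m + 3)) (hj : j ≠ i), j.val < r → G.map (δ j).op w = x j hj) :
    ∃ w' : G.obj (op ⦋m + 2⦌), ∀ (j : Fin (m + 3)) (hj : j ≠ i), j.val < r + 1 →
      G.map (δ j).op w' = x j hj := by
  have him : i.val ≤ m + 2 := by omega
  obtain ⟨R, hR⟩ : ∃ R : Fin (m + 2), (R : ℕ) = r := ⟨⟨r, by omega⟩, rfl⟩
  have hRne : R.castSucc ≠ i := Fin.ne_of_val_ne (by rw [Fin.coe_castSucc, hR]; omega)
  refine ⟨w * (G.map (σ R).op (G.map (δ R.castSucc).op w))⁻¹ *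
      G.map (σ R).op (x R.castSucc hRne), fun j hj hjr => ?_⟩
  rcases Nat.lt_or_ge j.val r with hlt | hge
  · -- j < r
    obtain ⟨a, ha⟩ : ∃ a : Fin (m + 2), (a : ℕ) = j.val := ⟨⟨j.val, by omega⟩, rfl⟩
    obtain ⟨b, hb⟩ : ∃ b : Fin (m + 1), (b : ℕ) = r - 1 := ⟨⟨r - 1, by omega⟩, rfl⟩
    obtain ⟨Q, hQ⟩ : ∃ Q : Fin (m + 2), (Q : ℕ) = r - 1 := ⟨⟨r - 1, by omega⟩, rfl⟩
    have hja : j = a.castSucc := by apply Fin.ext; rw [Fin.coe_castSucc, ha]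
    have hRb : R = b.succ := by apply Fin.ext; rw [Fin.val_succ, hb, hR]; omega
    have hQR : Q.succ = R.castSucc := by
      apply Fin.ext; rw [Fin.val_succ, Fin.coe_castSucc, hQ, hR]; omega
    have hab : a ≤ b.castSucc := by rw [Fin.le_def, Fin.coe_castSucc, ha, hb]; omega
    have haQ : a ≤ Q := by rw [Fin.le_def, ha, hQ]; omega
    have hδj : (δ j : (⦋m + 1⦌ : SimplexCategory) ⟶ ⦋m + 2⦌) = δ a.castSucc :=
      congrArg δ hja
    have h1 : Q.succ ≠ i := by rw [hQR]; exact hRne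
    have h2 : a.castSucc ≠ i := by rw [← hja]; exact hj
    have t2 : ∀ y : G.obj (op ⦋m + 1⦌),
        G.map (δ j).op (G.map (σ R).op y) = G.map (σ b).op (G.map (δ a).op y) := by
      intro y
      rw [hδj, hRb, A3 G a b hab]
    have e1 : G.map (δ a).op (G.map (δ R.castSucc).op w) = G.map (δ Q).op (x j hj) := by
      rw [← hQR, A5 G a Q haQ, ← hja, hw j hj hlt]
    have e2 : G.map (δ a).op (x R.castSucc hRne) = G.map (δ Q).op (x j hj) :=
      (congrArg _ (xeq G i x R.castSucc Q.succ hQR.symm hRne h1)).trans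
        ((hx a Q haQ h1 h2).trans (congrArg _ (xeq G i x a.castSucc j hja.symm h2 hj)))
    rw [map_mul, map_mul, map_inv, t2, t2, e1, e2, hw j hj hlt]
    exact inv_mul_cancel_right _ _
  · -- j = r
    have hjR : j = R.castSucc := by apply Fin.ext; rw [Fin.coe_castSucc, hR]; omega
    have hδj : (δ j : (⦋m + 1⦌ : SimplexCategory) ⟶ ⦋m + 2⦌) = δ R.castSucc :=
      congrArg δ hjR
    rw [xeq G i x j R.castSucc hjR hj hRne, hδj, map_mul, map_mul, map_inv, A1, A1,
      mul_inv_cancel, one_mul]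

lemma desc_step (r : ℕ) (hir : i.val < r) (hrm : r ≤ m + 2) (u : G.obj (op ⦋m + 2⦌))
    (hu : ∀ (j : Fin (m + 3)) (hj : j ≠ i), (j.val < i.val ∨ r + 1 ≤ j.val) →
      G.map (δ j).op u = x j hj) :
    ∃ u' : G.obj (op ⦋m + 2⦌), ∀ (j : Fin (m + 3)) (hj : j ≠ i),
      (j.val < i.val ∨ r ≤ j.val) → G.map (δ j).op u' = x j hj := by
  obtain ⟨R, hR⟩ : ∃ R : Fin (m + 3), (R : ℕ) = r := ⟨⟨r, by omega⟩, rfl⟩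
  have hRne : R ≠ i := Fin.ne_of_val_ne (by rw [hR]; omega)
  obtain ⟨P, hP⟩ : ∃ P : Fin (m + 2), (P : ℕ) = r - 1 := ⟨⟨r - 1, by omega⟩, rfl⟩
  have hRP : R = P.succ := by apply Fin.ext; rw [Fin.val_succ, hP, hR]; omega
  refine ⟨u * (G.map (σ P).op (G.map (δ R).op u))⁻¹ * G.map (σ P).op (x R hRne),
    fun j hj hcond => ?_⟩
  rcases hcond with hlt | hge
  · -- j < i < r
    have h2r : 2 ≤ r := by omega
    obtain ⟨a, ha⟩ : ∃ a : Fin (m + 2), (a : ℕ) = j.val := ⟨⟨j.val, by omega⟩, rfl⟩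
    obtain ⟨b, hb⟩ : ∃ b : Fin (m + 1), (b : ℕ) = r - 2 := ⟨⟨r - 2, by omega⟩, rfl⟩
    have hja : j = a.castSucc := by apply Fin.ext; rw [Fin.coe_castSucc, ha]
    have hPb : P = b.succ := by apply Fin.ext; rw [Fin.val_succ, hb, hP]; omega
    have hab : a ≤ b.castSucc := by rw [Fin.le_def, Fin.coe_castSucc, ha, hb]; omega
    have haP : a ≤ P := by rw [Fin.le_def, ha, hP]; omega
    have hδj : (δ j : (⦋m + 1⦌ : SimplexCategory) ⟶ ⦋m + 2⦌) = δ a.castSucc :=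
      congrArg δ hja
    have h1 : P.succ ≠ i := by rw [← hRP]; exact hRne
    have h2 : a.castSucc ≠ i := by rw [← hja]; exact hj
    have t2 : ∀ y : G.obj (op ⦋m + 1⦌),
        G.map (δ j).op (G.map (σ P).op y) = G.map (σ b).op (G.map (δ a).op y) := by
      intro y
      rw [hδj, hPb, A3 G a b hab]
    have e1 : G.map (δ a).op (G.map (δ R).op u) = G.map (δ P).op (x j hj) := by
      rw [hRP, A5 G a P haP, ← hja, hu j hj (Or.inl hlt)]
    have e2 : G.map (δ a).op (x R hRne) = G.map (δ P).op (x j hj) :=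
      (congrArg _ (xeq G i x R P.succ hRP hRne h1)).trans
        ((hx a P haP h1 h2).trans (congrArg _ (xeq G i x a.castSucc j hja.symm h2 hj)))
    rw [map_mul, map_mul, map_inv, t2, t2, e1, e2, hu j hj (Or.inl hlt)]
    exact inv_mul_cancel_right _ _
  · rcases Nat.eq_or_lt_of_le hge with hjeq | hjgt
    · -- j = r
      have hjR : j = R := by apply Fin.ext; rw [hR]; omega
      have hδj : (δ j : (⦋m + 1⦌ : SimplexCategory) ⟶ ⦋m + 2⦌) = δ P.succ := by
        rw [hjR, hRP]
      rw [xeq G i x j R hjR hj hRne, hδj, map_mul, map_mul, map_inv, A2, A2, ← hRP,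
        mul_inv_cancel, one_mul]
    · -- j > r
      have hjm : j.val ≤ m + 2 := by omega
      obtain ⟨a, ha⟩ : ∃ a : Fin (m + 2), (a : ℕ) = j.val - 1 := ⟨⟨j.val - 1, by omega⟩, rfl⟩
      obtain ⟨b, hb⟩ : ∃ b : Fin (m + 1), (b : ℕ) = r - 1 := ⟨⟨r - 1, by omega⟩, rfl⟩
      have hja : j = a.succ := by apply Fin.ext; rw [Fin.val_succ, ha]; omega
      have hPb : P = b.castSucc := by apply Fin.ext; rw [Fin.coe_castSucc, hb, hP]
      have hba : b.castSucc < a := by rw [Fin.lt_def, Fin.coe_castSucc, ha, hb]; omega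
      obtain ⟨P', hP'⟩ : ∃ P' : Fin (m + 2), (P' : ℕ) = r := ⟨⟨r, by omega⟩, rfl⟩
      have hRP' : R = P'.castSucc := by apply Fin.ext; rw [Fin.coe_castSucc, hP', hR]
      have hP'a : P' ≤ a := by rw [Fin.le_def, ha, hP']; omega
      have hδj : (δ j : (⦋m + 1⦌ : SimplexCategory) ⟶ ⦋m + 2⦌) = δ a.succ :=
        congrArg δ hja
      have h1 : a.succ ≠ i := by rw [← hja]; exact hj
      have h2 : P'.castSucc ≠ i := by rw [← hRP']; exact hRne
      have hju : G.map (δ j).op u = x j hj := hu j hj (Or.inr (by omega))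
      have t2 : ∀ y : G.obj (op ⦋m + 1⦌),
          G.map (δ j).op (G.map (σ P).op y) = G.map (σ b).op (G.map (δ a).op y) := by
        intro y
        rw [hδj, hPb, A4 G a b hba]
      have e1 : G.map (δ a).op (G.map (δ R).op u) = G.map (δ P').op (x j hj) := by
        rw [hRP', ← A5 G P' a hP'a, ← hδj, hju]
      have e2 : G.map (δ a).op (x R hRne) = G.map (δ P').op (x j hj) :=
        (congrArg _ (xeq G i x R P'.castSucc hRP' hRne h2)).trans
          ((hx P' a hP'a h1 h2).symm.trans
            (congrArg _ (xeq G i x a.succ j hja.symm h1 hj)))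
      rw [map_mul, map_mul, map_inv, t2, t2, e1, e2, hju]
      exact inv_mul_cancel_right _ _

lemma moore : ∃ g : G.obj (op ⦋m + 2⦌), ∀ (j : Fin (m + 3)) (hj : j ≠ i),
    G.map (δ j).op g = x j hj := by
  have asc : ∀ r : ℕ, r ≤ i.val → ∃ w : G.obj (op ⦋m + 2⦌),
      ∀ (j : Fin (m + 3)) (hj : j ≠ i), j.val < r → G.map (δ j).op w = x j hj := by
    intro r
    induction r with
    | zero => exact fun _ => ⟨1, fun j hj h => absurd h (by omega)⟩
    | succ r ih =>
      intro hr
      obtain ⟨w, hw⟩ := ih (by omega)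
      exact asc_step G i x hx r hr w hw
  have desc : ∀ k : ℕ, k ≤ m + 3 - i.val → ∃ w : G.obj (op ⦋m + 2⦌),
      ∀ (j : Fin (m + 3)) (hj : j ≠ i), (j.val < i.val ∨ m + 3 - k ≤ j.val) →
        G.map (δ j).op w = x j hj := by
    intro k
    induction k with
    | zero =>
      intro _
      obtain ⟨w, hw⟩ := asc i.val le_rfl
      exact ⟨w, fun j hj h => hw j hj (by omega)⟩
    | succ k ih =>
      intro hk
      obtain ⟨u, hu⟩ := ih (by omega)
      rcases Nat.eq_or_lt_of_le (show i.val ≤ m + 2 - k by omega) with hieq | hilt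
      · refine ⟨u, fun j hj h => hu j hj ?_⟩
        rcases h with h | h
        · exact Or.inl h
        · right
          have : j.val ≠ i.val := fun e => hj (Fin.ext e)
          omega
      · obtain ⟨u', hu'⟩ := desc_step G i x hx (m + 2 - k) hilt (by omega) u
          (fun j hj h => hu j hj (by omega))
        exact ⟨u', fun j hj h => hu' j hj (by omega)⟩
  obtain ⟨w, hw⟩ := desc (m + 3 - i.val) le_rfl
  exact ⟨w, fun j hj => hw j hj (by
    have : j.val ≠ i.val := fun e => hj (Fin.ext e)
    omega)⟩

end Moore

open CategoryTheory

/-- The underlying simplicial set of any simplicial group is a Kan complex: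
every horn `Λⁿ_k → G` (`0 ≤ k ≤ n`) in a simplicial group `G` admits a filler
`Δⁿ → G`. -/
theorem statement6 (G : SimplexCategoryᵒᵖ ⥤ GrpCat.{u}) :
    KanComplex (G ⋙ forget GrpCat) := by
  constructor
  intro n i σ₀
  match n, i, σ₀ with
  | 0, i, σ₀ =>
    refine ⟨(SSet.yonedaEquiv (X := G ⋙ forget GrpCat) (n := ⦋0⦌)).symm 1, ?_⟩
    apply NatTrans.ext
    ext mm α
    exfalso
    apply α.2
    apply Set.eq_univ_of_forall
    intro z
    exact Set.mem_union_right _ (Set.mem_singleton_iff.mpr (Fin.ext (by omega)))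
  | 1, i, σ₀ =>
    obtain ⟨jo, hjo⟩ : ∃ jo : Fin 2, (jo : ℕ) = 1 - i.val := ⟨⟨1 - i.val, by omega⟩, rfl⟩
    have hne : jo ≠ i := Fin.ne_of_val_ne (by omega)
    refine ⟨(SSet.yonedaEquiv (X := G ⋙ forget GrpCat) (n := ⦋1⦌)).symm
      (G.map (σ (0 : Fin 1)).op (σ₀.app (op ⦋0⦌) (horn.face i jo hne))), ?_⟩
    apply horn.hom_ext
    intro j hj
    have hjo' : j = jo := Fin.ext (by omega)
    have key : ∀ (f : (⦋0⦌ : SimplexCategory) ⟶ ⦋1⦌), f ≫ σ 0 = 𝟙 (⦋0⦌ : SimplexCategory) →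
        ∀ y : G.obj (op ⦋0⦌), G.map f.op (G.map (σ (0 : Fin 1)).op y) = y := by
      intro f hf y
      rw [← map_comp_apply G f (σ 0), hf, op_id, G.map_id]; rfl
    have this1 : ((horn 1 i).ι ≫ (SSet.yonedaEquiv (X := G ⋙ forget GrpCat) (n := ⦋1⦌)).symm
        (G.map (σ (0 : Fin 1)).op (σ₀.app (op ⦋0⦌) (horn.face i jo hne)))).app (op ⦋0⦌)
        (horn.face i j hj) =
        G.map (δ j).op (G.map (σ (0 : Fin 1)).op (σ₀.app (op ⦋0⦌) (horn.face i jo hne))) := rfl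
    rw [this1]
    have hd : G.map (δ j).op (G.map (σ (0 : Fin 1)).op (σ₀.app (op ⦋0⦌) (horn.face i jo hne))) =
        σ₀.app (op ⦋0⦌) (horn.face i jo hne) := by
      fin_cases j
      · exact key (δ 0) (δ_comp_σ_self' (Fin.ext (by simp))) _
      · exact key (δ 1) (δ_comp_σ_succ' (Fin.ext (by simp))) _
    rw [hd]
    subst hjo'
    rfl
  | (m + 2), i, σ₀ =>
    obtain ⟨g, hg⟩ := moore G i (fun j hj => σ₀.app (op ⦋m + 1⦌) (horn.face i j hj)) (by
      intro a b hab h1 h2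
      have key : (Λ[m + 2, i] : SSet).map (δ a).op (horn.face i b.succ h1) =
          (Λ[m + 2, i] : SSet).map (δ b).op (horn.face i a.castSucc h2) := by
        apply Subtype.ext
        show Δ[m + 2].map (δ a).op _ = Δ[m + 2].map (δ b).op _
        rw [stdSimplex.map_apply, stdSimplex.map_apply]
        simp only [horn.face, Equiv.apply_symm_apply]
        exact congrArg _ (δ_comp_δ hab)
      have n1 := NatTrans.naturality_apply σ₀ (δ a).op (horn.face i b.succ h1)
      have n2 := NatTrans.naturality_apply σ₀ (δ b).op (horn.face i a.castSucc h2)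
      dsimp at n1 n2
      rw [← n1, ← n2]; exact congrArg _ key)
    refine ⟨(SSet.yonedaEquiv (X := G ⋙ forget GrpCat) (n := ⦋m + 2⦌)).symm g, ?_⟩
    apply horn.hom_ext
    intro j hj
    have this1 : ((horn (m + 2) i).ι ≫ (SSet.yonedaEquiv (X := G ⋙ forget GrpCat) (n := ⦋m + 2⦌)).symm
        g).app (op ⦋m + 1⦌) (horn.face i j hj) = G.map (δ j).op g := rfl
    rw [this1, hg j hj]

end Statement6
end

section
/- A homomorphism p : G → H of simplicial groups that is surjective in every simplicial degree is a Kan fibration of underlying simplicial sets. -/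
open CategoryTheory

namespace Statement7

universe u

open Simplicial Opposite SimplexCategory SSet

variable {G H : SimplexCategoryᵒᵖ ⥤ GrpCat.{u}}

lemma mapG (X : SimplexCategoryᵒᵖ ⥤ GrpCat.{u}) {a b c : SimplexCategory} (φ : a ⟶ b) (ψ : b ⟶ c)
    (g : X.obj (op c)) : X.map (φ ≫ ψ).op g = X.map φ.op (X.map ψ.op g) := by
  rw [op_comp, X.map_comp]; rfl

lemma dd (G : SimplexCategoryᵒᵖ ⥤ GrpCat.{u}) {m : ℕ} (a b : ℕ) (hab : a < b) (hb : b ≤ m + 2)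
    (g : G _⦋m+2⦌) :
    G.map (δ (⟨a, by omega⟩ : Fin (m+2))).op (G.map (δ (⟨b, by omega⟩ : Fin (m+3))).op g)
      = G.map (δ (⟨b-1, by omega⟩ : Fin (m+2))).op (G.map (δ (⟨a, by omega⟩ : Fin (m+3))).op g) := by
  rw [← mapG, ← mapG]
  have e1 : (⟨b, by omega⟩ : Fin (m+3)) = (⟨b-1, by omega⟩ : Fin (m+2)).succ := by
    ext; simp [Fin.succ]; omega
  have e2 : (⟨a, by omega⟩ : Fin (m+3)) = (⟨a, by omega⟩ : Fin (m+2)).castSucc := rfl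
  rw [e1, e2, δ_comp_δ (by simp [Fin.le_def]; omega)]

lemma ds_self (G : SimplexCategoryᵒᵖ ⥤ GrpCat.{u}) {m : ℕ} (r : ℕ) (hr : r ≤ m + 1)
    (z : G _⦋m+1⦌) :
    G.map (δ (⟨r, by omega⟩ : Fin (m+3))).op (G.map (σ (⟨r, by omega⟩ : Fin (m+2))).op z) = z := by
  rw [← mapG]
  have e : (⟨r, by omega⟩ : Fin (m+3)) = (⟨r, by omega⟩ : Fin (m+2)).castSucc := rfl
  rw [e, δ_comp_σ_self]
  simp

lemma ds_succ (G : SimplexCategoryᵒᵖ ⥤ GrpCat.{u}) {m : ℕ} (r : ℕ) (hr : r ≤ m + 1)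
    (z : G _⦋m+1⦌) :
    G.map (δ (⟨r+1, by omega⟩ : Fin (m+3))).op (G.map (σ (⟨r, by omega⟩ : Fin (m+2))).op z) = z := by
  rw [← mapG]
  have e : (⟨r+1, by omega⟩ : Fin (m+3)) = (⟨r, by omega⟩ : Fin (m+2)).succ := by
    ext; simp [Fin.succ]
  rw [e, δ_comp_σ_succ]
  simp

lemma ds_lt (G : SimplexCategoryᵒᵖ ⥤ GrpCat.{u}) {m : ℕ} (a r : ℕ) (har : a < r) (hr : r ≤ m + 1)
    (z : G _⦋m+1⦌) :
    G.map (δ (⟨a, by omega⟩ : Fin (m+3))).op (G.map (σ (⟨r, by omega⟩ : Fin (m+2))).op z)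
      = G.map (σ (⟨r-1, by omega⟩ : Fin (m+1))).op
          (G.map (δ (⟨a, by omega⟩ : Fin (m+2))).op z) := by
  rw [← mapG, ← mapG]
  have e1 : (⟨a, by omega⟩ : Fin (m+3)) = (⟨a, by omega⟩ : Fin (m+2)).castSucc := rfl
  have e2 : (⟨r, by omega⟩ : Fin (m+2)) = (⟨r-1, by omega⟩ : Fin (m+1)).succ := by
    ext; simp [Fin.succ]; omega
  rw [e1, e2, δ_comp_σ_of_le (by simp [Fin.le_def]; omega)]

lemma ds_gt (G : SimplexCategoryᵒᵖ ⥤ GrpCat.{u}) {m : ℕ} (b r : ℕ) (hrb : r + 1 < b)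
    (hb : b ≤ m + 2) (hr : r ≤ m) (z : G _⦋m+1⦌) :
    G.map (δ (⟨b, by omega⟩ : Fin (m+3))).op (G.map (σ (⟨r, by omega⟩ : Fin (m+2))).op z)
      = G.map (σ (⟨r, by omega⟩ : Fin (m+1))).op
          (G.map (δ (⟨b-1, by omega⟩ : Fin (m+2))).op z) := by
  rw [← mapG, ← mapG]
  have e1 : (⟨b, by omega⟩ : Fin (m+3)) = (⟨b-1, by omega⟩ : Fin (m+2)).succ := by
    ext; simp [Fin.succ]; omega
  have e2 : (⟨r, by omega⟩ : Fin (m+2)) = (⟨r, by omega⟩ : Fin (m+1)).castSucc := rfl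
  rw [e1, e2, δ_comp_σ_of_gt (by simp [Fin.lt_def]; omega)]

lemma papp (p : G ⟶ H) {c c' : SimplexCategoryᵒᵖ} (f : c ⟶ c') (x : G.obj c) :
    p.app c' (G.map f x) = H.map f (p.app c x) := by
  have := congrArg (fun (h : G.obj c ⟶ H.obj c') => h x) (p.naturality f)
  exact this


lemma ds_succ' (G : SimplexCategoryᵒᵖ ⥤ GrpCat.{u}) {m : ℕ} (b : ℕ) (hb1 : 1 ≤ b)
    (hb : b ≤ m + 2) (z : G _⦋m+1⦌) :
    G.map (δ (⟨b, by omega⟩ : Fin (m+3))).op (G.map (σ (⟨b-1, by omega⟩ : Fin (m+2))).op z)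
      = z := by
  rw [← mapG]
  have e : (⟨b, by omega⟩ : Fin (m+3)) = (⟨b-1, by omega⟩ : Fin (m+2)).succ := by
    ext; simp [Fin.succ]; omega
  rw [e, δ_comp_σ_succ]
  simp

section Step
variable (p : G ⟶ H) {m : ℕ} (c : Fin (m+2)) (j : Fin (m+3)) (u : G _⦋m+2⦌) (yj : G _⦋m+1⦌)

lemma step_ker (hu : p.app _ u = 1) (hy : p.app _ yj = 1) :
    p.app _ (u * (G.map (σ c).op (G.map (δ j).op u))⁻¹ * G.map (σ c).op yj) = 1 := by
  simp [map_mul, map_inv, papp p, hu, hy]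

lemma step_new (w : G _⦋m+1⦌) (hw : yj = w)
    (hcs : ∀ z : G _⦋m+1⦌, G.map (δ j).op (G.map (σ c).op z) = z) :
    G.map (δ j).op (u * (G.map (σ c).op (G.map (δ j).op u))⁻¹ * G.map (σ c).op yj) = w := by
  simp [map_mul, map_inv, hcs, hw]

lemma step_pres (l : Fin (m+3)) (c' : Fin (m+1)) (e : Fin (m+2))
    (hcs : ∀ z : G _⦋m+1⦌,
      G.map (δ l).op (G.map (σ c).op z) = G.map (σ c').op (G.map (δ e).op z))
    (hkey : G.map (δ e).op (G.map (δ j).op u) = G.map (δ e).op yj)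
    (w : G _⦋m+1⦌) (hu : G.map (δ l).op u = w) :
    G.map (δ l).op (u * (G.map (σ c).op (G.map (δ j).op u))⁻¹ * G.map (σ c).op yj)
      = w := by
  simp [map_mul, map_inv, hcs, hkey, hu]

end Step

set_option maxHeartbeats 2000000 in
lemma fillKer (p : G ⟶ H) {m : ℕ} (i : Fin (m+3)) (y : ∀ b : Fin (m+3), b ≠ i → G _⦋m+1⦌)
    (hker : ∀ b hb, p.app _ (y b hb) = 1)
    (hcomp : ∀ (a b : ℕ) (hab : a < b) (hb : b ≤ m+2) (ha' : (⟨a, by omega⟩ : Fin (m+3)) ≠ i)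
      (hb' : (⟨b, by omega⟩ : Fin (m+3)) ≠ i),
      G.map (δ (⟨b-1, by omega⟩ : Fin (m+2))).op (y ⟨a, by omega⟩ ha')
        = G.map (δ (⟨a, by omega⟩ : Fin (m+2))).op (y ⟨b, by omega⟩ hb')) :
    ∃ u : G _⦋m+2⦌, p.app _ u = 1 ∧
      ∀ (b : Fin (m+3)) (hb : b ≠ i), G.map (δ b).op u = y b hb := by
  have claim1 : ∀ r : ℕ, r ≤ (i : ℕ) → ∃ u : G _⦋m+2⦌, p.app _ u = 1 ∧
      ∀ (a : ℕ) (h3 : a < m + 3), a < r → ∀ (ha : (⟨a, h3⟩ : Fin (m+3)) ≠ i),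
        G.map (δ ⟨a, h3⟩).op u = y ⟨a, h3⟩ ha := by
    intro r
    induction r with
    | zero => exact fun _ => ⟨1, map_one _, fun a h3 h _ => absurd h (Nat.not_lt_zero _)⟩
    | succ r IH =>
      intro hr
      obtain ⟨u, hu1, huf⟩ := IH (by omega)
      have him : (i : ℕ) ≤ m + 2 := by omega
      have hji : (⟨r, by omega⟩ : Fin (m+3)) ≠ i := Fin.ne_of_val_ne (show r ≠ (i:ℕ) by omega)
      refine ⟨u * (G.map (σ (⟨r, by omega⟩ : Fin (m+2))).op
          (G.map (δ (⟨r, by omega⟩ : Fin (m+3))).op u))⁻¹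
          * G.map (σ (⟨r, by omega⟩ : Fin (m+2))).op (y ⟨r, by omega⟩ hji), ?_, ?_⟩
      · exact step_ker p _ _ _ _ hu1 (hker _ _)
      · intro a h3 ha hai
        rcases Nat.lt_or_ge a r with hlt | hge
        · -- old face
          refine step_pres _ _ _ _ ⟨a, h3⟩ ⟨r-1, by omega⟩ ⟨a, by omega⟩
              (fun z => ds_lt G a r hlt (by omega) z) ?_ _ (huf a h3 hlt hai)
          rw [dd G a r hlt (by omega) u, huf a (by omega) hlt hai]
          exact hcomp a r hlt (by omega) hai hji
        · -- new face: a = r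
          have hav' : a = r := by omega
          subst hav'
          exact step_new _ _ _ _ _ rfl (fun z => ds_self G a (by omega) z)
  have claim2 : ∀ k : ℕ, k ≤ m + 2 - (i : ℕ) → ∃ u : G _⦋m+2⦌, p.app _ u = 1 ∧
      ∀ (a : ℕ) (h3 : a < m + 3), (a < (i : ℕ) ∨ m + 3 - k ≤ a) →
        ∀ (ha : (⟨a, h3⟩ : Fin (m+3)) ≠ i), G.map (δ ⟨a, h3⟩).op u = y ⟨a, h3⟩ ha := by
    intro k
    induction k with
    | zero =>
      intro _
      obtain ⟨u, h1, h2⟩ := claim1 i le_rfl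
      exact ⟨u, h1, fun a h3 ha hai => h2 a h3 (by omega) hai⟩
    | succ k IH =>
      intro hk
      obtain ⟨u, hu1, huf⟩ := IH (by omega)
      obtain ⟨b, hbdef⟩ : ∃ b, b = m + 2 - k := ⟨_, rfl⟩
      have hbi : (i : ℕ) < b := by omega
      have hb2 : b ≤ m + 2 := by omega
      have hb1 : 1 ≤ b := by omega
      have hji : (⟨b, by omega⟩ : Fin (m+3)) ≠ i := Fin.ne_of_val_ne (show b ≠ (i:ℕ) by omega)
      refine ⟨u * (G.map (σ (⟨b - 1, by omega⟩ : Fin (m+2))).op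
          (G.map (δ (⟨b, by omega⟩ : Fin (m+3))).op u))⁻¹
          * G.map (σ (⟨b - 1, by omega⟩ : Fin (m+2))).op (y ⟨b, by omega⟩ hji), ?_, ?_⟩
      · exact step_ker p _ _ _ _ hu1 (hker _ _)
      · intro a h3 hcase hai
        have hcase' : a < (i : ℕ) ∨ a = b ∨ b < a := by omega
        rcases hcase' with hlt | heq | hgt
        · -- old low face
          refine step_pres _ _ _ _ ⟨a, h3⟩ ⟨b - 1 - 1, by omega⟩ ⟨a, by omega⟩
              (fun z => ds_lt G a (b - 1) (by omega) (by omega) z) ?_ _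
              (huf a h3 (Or.inl hlt) hai)
          rw [dd G a b (by omega) (by omega) u, huf a (by omega) (Or.inl hlt) hai]
          exact hcomp a b (by omega) (by omega) hai hji
        · -- new face
          subst heq
          exact step_new _ _ _ _ _ rfl (fun z => ds_succ' G a hb1 hb2 z)
        · -- old high face
          refine step_pres _ _ _ _ ⟨a, h3⟩ ⟨b - 1, by omega⟩ ⟨a - 1, by omega⟩
              (fun z => ds_gt G a (b - 1) (by omega) (by omega) (by omega) z) ?_ _
              (huf a h3 (Or.inr (by omega)) hai)
          have hd := dd G b a hgt (by omega) u
          rw [← hd, huf a (by omega) (Or.inr (by omega)) hai]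
          exact (hcomp b a hgt (by omega) hji hai).symm
  obtain ⟨u, h1, h2⟩ := claim2 (m + 2 - (i : ℕ)) le_rfl
  refine ⟨u, h1, fun b hb => ?_⟩
  have hne := Fin.val_ne_of_ne hb
  have := h2 (b : ℕ) b.2 (by omega) (by simpa using hb)
  simpa using this

lemma fillKer0 (p : G ⟶ H) (i : Fin 2) (y : ∀ b : Fin 2, b ≠ i → G _⦋0⦌)
    (hker : ∀ b hb, p.app _ (y b hb) = 1) :
    ∃ u : G _⦋1⦌, p.app _ u = 1 ∧ ∀ (b : Fin 2) (hb : b ≠ i), G.map (δ b).op u = y b hb := by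
  fin_cases i
  · refine ⟨G.map (σ (0 : Fin 1)).op (y 1 (by decide)), ?_, ?_⟩
    · rw [papp p, hker, map_one]
    · intro b hb
      have hb1 : b = 1 := by
        have h2 := b.isLt
        have hv : (b : ℕ) ≠ 0 := by simpa using Fin.val_ne_of_ne hb
        apply Fin.ext
        simp only [Fin.val_one]
        omega
      subst hb1
      rw [← mapG, show SimplexCategory.δ (1 : Fin 2) = SimplexCategory.δ (0 : Fin 1).succ from rfl,
        δ_comp_σ_succ]
      simp
  · refine ⟨G.map (σ (0 : Fin 1)).op (y 0 (by decide)), ?_, ?_⟩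
    · rw [papp p, hker, map_one]
    · intro b hb
      have hb1 : b = 0 := by
        have h2 := b.isLt
        have hv : (b : ℕ) ≠ 1 := by simpa using Fin.val_ne_of_ne hb
        apply Fin.ext
        simp only [Fin.val_zero]
        omega
      subst hb1
      rw [← mapG, show SimplexCategory.δ (0 : Fin 2) = SimplexCategory.δ (0 : Fin 1).castSucc
        from rfl, δ_comp_σ_self]
      simp

lemma fillSurj (p : G ⟶ H) (hp : ∀ m : SimplexCategoryᵒᵖ, Function.Surjective (p.app m))
    {m : ℕ} (i : Fin (m+3)) (t : H _⦋m+2⦌) (x : ∀ b : Fin (m+3), b ≠ i → G _⦋m+1⦌)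
    (hpt : ∀ b hb, p.app _ (x b hb) = H.map (δ b).op t)
    (hcomp : ∀ (a b : ℕ) (hab : a < b) (hb : b ≤ m+2) (ha' : (⟨a, by omega⟩ : Fin (m+3)) ≠ i)
      (hb' : (⟨b, by omega⟩ : Fin (m+3)) ≠ i),
      G.map (δ (⟨b-1, by omega⟩ : Fin (m+2))).op (x ⟨a, by omega⟩ ha')
        = G.map (δ (⟨a, by omega⟩ : Fin (m+2))).op (x ⟨b, by omega⟩ hb')) :
    ∃ u : G _⦋m+2⦌, p.app _ u = t ∧
      ∀ (b : Fin (m+3)) (hb : b ≠ i), G.map (δ b).op u = x b hb := by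
  obtain ⟨w, hw⟩ := hp _ t
  have hker : ∀ (b : Fin (m+3)) (hb : b ≠ i),
      p.app _ (x b hb * (G.map (δ b).op w)⁻¹) = 1 := by
    intro b hb
    rw [map_mul, map_inv, hpt, papp p, hw, mul_inv_cancel]
  have hc : ∀ (a b : ℕ) (hab : a < b) (hb : b ≤ m+2) (ha' : (⟨a, by omega⟩ : Fin (m+3)) ≠ i)
      (hb' : (⟨b, by omega⟩ : Fin (m+3)) ≠ i),
      G.map (δ (⟨b-1, by omega⟩ : Fin (m+2))).op
          (x ⟨a, by omega⟩ ha' * (G.map (δ (⟨a, by omega⟩ : Fin (m+3))).op w)⁻¹)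
        = G.map (δ (⟨a, by omega⟩ : Fin (m+2))).op
          (x ⟨b, by omega⟩ hb' * (G.map (δ (⟨b, by omega⟩ : Fin (m+3))).op w)⁻¹) := by
    intro a b hab hb ha' hb'
    rw [map_mul, map_mul, map_inv, map_inv, hcomp a b hab hb ha' hb', dd G a b hab hb w]
  obtain ⟨v, hv1, hv2⟩ := fillKer p i (fun b hb => x b hb * (G.map (δ b).op w)⁻¹) hker hc
  refine ⟨v * w, ?_, ?_⟩
  · rw [map_mul, hv1, hw, one_mul]
  · intro b hb
    rw [map_mul, hv2 b hb]
    simp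

lemma fillSurj0 (p : G ⟶ H) (hp : ∀ m : SimplexCategoryᵒᵖ, Function.Surjective (p.app m))
    (i : Fin 2) (t : H _⦋1⦌) (x : ∀ b : Fin 2, b ≠ i → G _⦋0⦌)
    (hpt : ∀ b hb, p.app _ (x b hb) = H.map (δ b).op t) :
    ∃ u : G _⦋1⦌, p.app _ u = t ∧
      ∀ (b : Fin 2) (hb : b ≠ i), G.map (δ b).op u = x b hb := by
  obtain ⟨w, hw⟩ := hp _ t
  have hker : ∀ (b : Fin 2) (hb : b ≠ i),
      p.app _ (x b hb * (G.map (δ b).op w)⁻¹) = 1 := by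
    intro b hb
    rw [map_mul, map_inv, hpt, papp p, hw, mul_inv_cancel]
  obtain ⟨v, hv1, hv2⟩ := fillKer0 p i (fun b hb => x b hb * (G.map (δ b).op w)⁻¹) hker
  refine ⟨v * w, ?_, ?_⟩
  · rw [map_mul, hv1, hw, one_mul]
  · intro b hb
    rw [map_mul, hv2 b hb]
    simp

open SSet in
lemma app_eq {Y : SSet.{u}} {n : ℕ} (g : Δ[n] ⟶ Y) (m : SimplexCategoryᵒᵖ)
    (α : Δ[n].obj m) :
    g.app m α = Y.map ((stdSimplex.objEquiv (n := ⦋n⦌) (m := m)) α).op (SSet.yonedaEquiv (X := Y) (n := ⦋n⦌) g) := by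
  conv_lhs => rw [← (SSet.yonedaEquiv (X := Y) (n := ⦋n⦌)).symm_apply_apply g,
    ← (stdSimplex.objEquiv (n := ⦋n⦌) (m := m)).symm_apply_apply α]
  exact SSet.yonedaEquiv_symm_app_objEquiv_symm _ _

open SSet in
lemma symm_app {Y : SSet.{u}} {n : ℕ} (u : Y.obj (op ⦋n⦌)) (m : SimplexCategoryᵒᵖ)
    (φ : m.unop ⟶ ⦋n⦌) :
    ((SSet.yonedaEquiv (X := Y) (n := ⦋n⦌)).symm u).app m ((stdSimplex.objEquiv (n := ⦋n⦌) (m := m)).symm φ)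
      = Y.map φ.op u := by
  rw [app_eq ((SSet.yonedaEquiv (X := Y) (n := ⦋n⦌)).symm u) m]
  simp

open SSet in
lemma comm2 (p : G ⟶ H) {n : ℕ} (g : Δ[n] ⟶ (H ⋙ forget GrpCat)) (u : G _⦋n⦌)
    (hpu : p.app _ u = SSet.yonedaEquiv (X := (H ⋙ forget GrpCat)) (n := ⦋n⦌) g) :
    (SSet.yonedaEquiv (X := (G ⋙ forget GrpCat)) (n := ⦋n⦌)).symm u ≫ Functor.whiskerRight p (forget GrpCat) = g := by
  apply NatTrans.ext
  funext m
  ext α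
  have hα : α = (stdSimplex.objEquiv (n := ⦋n⦌) (m := m)).symm ((stdSimplex.objEquiv (n := ⦋n⦌) (m := m)) α) :=
    ((stdSimplex.objEquiv (n := ⦋n⦌) (m := m)).symm_apply_apply α).symm
  show (Functor.whiskerRight p (forget GrpCat)).app m
      (((SSet.yonedaEquiv (X := (G ⋙ forget GrpCat)) (n := ⦋n⦌)).symm u).app m α) = g.app m α
  rw [hα, symm_app, app_eq g m]
  have : (Functor.whiskerRight p (forget GrpCat)).app m
      ((G ⋙ forget GrpCat).map ((stdSimplex.objEquiv (n := ⦋n⦌) (m := m)) α).op u)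
      = H.map ((stdSimplex.objEquiv (n := ⦋n⦌) (m := m)) α).op (p.app _ u) :=
    papp p ((stdSimplex.objEquiv (n := ⦋n⦌) (m := m)) α).op u
  rw [this, hpu]
  simp

open SSet in
lemma liftHorn (p : G ⟶ H) {n : ℕ} (i : Fin (n+2)) (f : (Λ[n+1, i] : SSet.{u}) ⟶ (G ⋙ forget GrpCat))
    (g : Δ[n+1] ⟶ (H ⋙ forget GrpCat)) (u : G _⦋n+1⦌)
    (hpu : p.app _ u = SSet.yonedaEquiv (X := (H ⋙ forget GrpCat)) (n := ⦋n+1⦌) g)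
    (hfaces : ∀ (b : Fin (n+2)) (hb : b ≠ i),
      G.map (δ b).op u = f.app _ (SSet.horn.face i b hb)) :
    ∃ l : Δ[n+1] ⟶ (G ⋙ forget GrpCat),
      (SSet.horn (n+1) i).ι ≫ l = f ∧ l ≫ Functor.whiskerRight p (forget GrpCat) = g := by
  refine ⟨(SSet.yonedaEquiv (X := (G ⋙ forget GrpCat)) (n := ⦋n+1⦌)).symm u, ?_, ?_⟩
  · apply SSet.horn.hom_ext
    intro j hj
    have h1 : ((SSet.horn (n+1) i).ι ≫ (SSet.yonedaEquiv (X := (G ⋙ forget GrpCat)) (n := ⦋n+1⦌)).symm u).app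
        (op ⦋n⦌) (SSet.horn.face i j hj)
        = ((SSet.yonedaEquiv (X := (G ⋙ forget GrpCat)) (n := ⦋n+1⦌)).symm u).app (op ⦋n⦌)
            ((stdSimplex.objEquiv (n := ⦋n+1⦌) (m := (op ⦋n⦌))).symm (δ j)) := rfl
    rw [h1, symm_app]
    exact hfaces j hj
  · exact comm2 p g u hpu

open SSet in
/-- Extraction of the `p`-compatibility of the faces from the commuting square. -/
lemma hpt_of_sq (p : G ⟶ H) {n : ℕ} (i : Fin (n+2)) (f : (Λ[n+1, i] : SSet.{u}) ⟶ (G ⋙ forget GrpCat))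
    (g : Δ[n+1] ⟶ (H ⋙ forget GrpCat))
    (hw : f ≫ Functor.whiskerRight p (forget GrpCat) = (SSet.horn (n+1) i).ι ≫ g)
    (b : Fin (n+2)) (hb : b ≠ i) :
    p.app _ (f.app _ (SSet.horn.face i b hb))
      = H.map (δ b).op (SSet.yonedaEquiv (X := (H ⋙ forget GrpCat)) (n := ⦋n+1⦌) g) := by
  have h := types_congr_hom (NatTrans.congr_app hw (op ⦋n⦌)) (SSet.horn.face i b hb)
  simp only [types_comp_apply] at h
  have h2 : (f ≫ Functor.whiskerRight p (forget GrpCat)).app (op ⦋n⦌) (SSet.horn.face i b hb)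
      = p.app _ (f.app _ (SSet.horn.face i b hb)) := rfl
  have h3 : ((SSet.horn (n+1) i).ι ≫ g).app (op ⦋n⦌) (SSet.horn.face i b hb)
      = g.app (op ⦋n⦌) ((stdSimplex.objEquiv (n := ⦋n+1⦌) (m := (op ⦋n⦌))).symm (δ b)) := rfl
  rw [h2, h3] at *
  have h4 := types_congr_hom (NatTrans.congr_app hw (op ⦋n⦌)) (SSet.horn.face i b hb)
  have h5 : p.app _ (f.app _ (SSet.horn.face i b hb))
      = g.app (op ⦋n⦌) ((stdSimplex.objEquiv (n := ⦋n+1⦌) (m := (op ⦋n⦌))).symm (δ b)) := h4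
  rw [h5, app_eq g (op ⦋n⦌)]
  simp

open SSet in
/-- Compatibility of the faces of a horn in a simplicial group. -/
lemma hcomp_of_f {m : ℕ} (i : Fin (m+3)) (f : (Λ[m+2, i] : SSet.{u}) ⟶ (G ⋙ forget GrpCat))
    (a b : ℕ) (hab : a < b) (hb : b ≤ m+2) (ha' : (⟨a, by omega⟩ : Fin (m+3)) ≠ i)
    (hb' : (⟨b, by omega⟩ : Fin (m+3)) ≠ i) :
    G.map (δ (⟨b-1, by omega⟩ : Fin (m+2))).op
        (f.app _ (SSet.horn.face i ⟨a, by omega⟩ ha'))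
      = G.map (δ (⟨a, by omega⟩ : Fin (m+2))).op
        (f.app _ (SSet.horn.face i ⟨b, by omega⟩ hb')) := by
  have h1 := types_congr_hom (f.naturality (δ (⟨b-1, by omega⟩ : Fin (m+2))).op)
    (SSet.horn.face i ⟨a, by omega⟩ ha')
  have h2 := types_congr_hom (f.naturality (δ (⟨a, by omega⟩ : Fin (m+2))).op)
    (SSet.horn.face i ⟨b, by omega⟩ hb')
  simp only [types_comp_apply] at h1 h2
  have e1 : (G ⋙ forget GrpCat).map (δ (⟨b-1, by omega⟩ : Fin (m+2))).op
      (f.app _ (SSet.horn.face i ⟨a, by omega⟩ ha'))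
      = G.map (δ (⟨b-1, by omega⟩ : Fin (m+2))).op
        (f.app _ (SSet.horn.face i ⟨a, by omega⟩ ha')) := rfl
  have e2 : (G ⋙ forget GrpCat).map (δ (⟨a, by omega⟩ : Fin (m+2))).op
      (f.app _ (SSet.horn.face i ⟨b, by omega⟩ hb'))
      = G.map (δ (⟨a, by omega⟩ : Fin (m+2))).op
        (f.app _ (SSet.horn.face i ⟨b, by omega⟩ hb')) := rfl
  rw [← e1, ← e2, ← h1, ← h2]
  refine congrArg (f.app (op ⦋m⦌)) ?_
  apply Subtype.ext
  show Δ[m+2].map (δ (⟨b-1, by omega⟩ : Fin (m+2))).op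
      ((stdSimplex.objEquiv (n := ⦋m+2⦌) (m := (op ⦋m+1⦌))).symm (δ (⟨a, by omega⟩ : Fin (m+3))))
    = Δ[m+2].map (δ (⟨a, by omega⟩ : Fin (m+2))).op
      ((stdSimplex.objEquiv (n := ⦋m+2⦌) (m := (op ⦋m+1⦌))).symm (δ (⟨b, by omega⟩ : Fin (m+3))))
  rw [stdSimplex.map_apply, stdSimplex.map_apply]
  simp only [Quiver.Hom.unop_op, Equiv.apply_symm_apply]
  congr 1
  have eb : (⟨b, by omega⟩ : Fin (m+3)) = (⟨b-1, by omega⟩ : Fin (m+2)).succ := by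
    ext; simp [Fin.succ]; omega
  have ea : (⟨a, by omega⟩ : Fin (m+3)) = (⟨a, by omega⟩ : Fin (m+2)).castSucc := rfl
  rw [eb, ea, δ_comp_δ (by simp [Fin.le_def]; omega)]


/-- A map of simplicial sets is a Kan fibration if it has the right lifting
property against all horn inclusions `Λⁿ_k → Δⁿ`. -/
def IsKanFibration {X Y : SSet.{u}} (p : X ⟶ Y) : Prop :=
  ∀ (n : ℕ) (i : Fin (n + 1)), HasLiftingProperty (SSet.horn n i).ι p

/-- A homomorphism of simplicial groups that is surjective in every simplicial
degree is a Kan fibration of underlying simplicial sets. -/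
theorem statement7 (G H : SimplexCategoryᵒᵖ ⥤ GrpCat.{u}) (p : G ⟶ H)
    (hp : ∀ m : SimplexCategoryᵒᵖ, Function.Surjective (p.app m)) :
    IsKanFibration (Functor.whiskerRight p (forget GrpCat)) := by
  intro n i
  constructor
  intro f g sq
  cases n with
  | zero =>
    obtain ⟨u, hu⟩ := hp (op ⦋0⦌) (SSet.yonedaEquiv (X := (H ⋙ forget GrpCat)) (n := ⦋0⦌) g)
    refine ⟨⟨⟨(SSet.yonedaEquiv (X := (G ⋙ forget GrpCat)) (n := ⦋0⦌)).symm u, ?_, ?_⟩⟩⟩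
    · apply NatTrans.ext
      funext m
      ext α
      refine absurd ?_ α.2
      refine Set.eq_univ_of_forall fun x => Or.inr ?_
      exact Set.mem_singleton_iff.mpr (by omega)
    · exact comm2 p g u hu
  | succ n =>
    cases n with
    | zero =>
      obtain ⟨u, hpu, hfaces⟩ := fillSurj0 p hp i
        (SSet.yonedaEquiv (X := (H ⋙ forget GrpCat)) (n := ⦋1⦌) g)
        (fun b hb => f.app _ (SSet.horn.face i b hb))
        (fun b hb => hpt_of_sq p i f g sq.w b hb)
      obtain ⟨l, h1, h2⟩ := liftHorn p i f g u hpu hfaces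
      exact ⟨⟨⟨l, h1, h2⟩⟩⟩
    | succ m =>
      obtain ⟨u, hpu, hfaces⟩ := fillSurj p hp i
        (SSet.yonedaEquiv (X := (H ⋙ forget GrpCat)) (n := ⦋m+2⦌) g)
        (fun b hb => f.app _ (SSet.horn.face i b hb))
        (fun b hb => hpt_of_sq p i f g sq.w b hb)
        (fun a b hab hb ha' hb' => hcomp_of_f i f a b hab hb ha' hb')
      obtain ⟨l, h1, h2⟩ := liftHorn p i f g u hpu hfaces
      exact ⟨⟨⟨l, h1, h2⟩⟩⟩


end Statement7
end
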